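/- Let M be a rank 3 simple matroid with n elements, ℓ flats, and m complete flags. Then m − 2n + 1 ≥ ℓ − 2; equivalently, 2n ≤ m − ℓ + 3. -/

import Mathlib

/-- Auxiliary: the inequality proved by strong induction on the number of points. -/
theorem ffi_aux : ∀ (n : ℕ) {α : Type*} [DecidableEq α] (E : Finset α) (F : Finset (Finset α)),
    E.card = n →
    (∀ f ∈ F, f ⊆ E) →
    (∀ x ∈ E, ∀ y ∈ E, x ≠ y → ∃! f, f ∈ F ∧ x ∈ f ∧ y ∈ f) →
    (∀ f ∈ F, 2 ≤ f.card) →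
    2 ≤ F.card →
    2 * (E.card : ℤ) ≤ (∑ f ∈ F, (f.card : ℤ)) - (F.card : ℤ) + 3 := by
  intro n
  induction n using Nat.strong_induction_on with
  | _ n ih =>
  intro α _ E F hcard hsub hpair hflat htwo
  subst hcard
  -- no flat is all of E
  have hne : ∀ f ∈ F, f ≠ E := by
    intro f hf hfE
    obtain ⟨g, hg, hgf⟩ := Finset.exists_mem_ne htwo f
    obtain ⟨x, hx, y, hy, hxy⟩ := Finset.one_lt_card.mp (hflat g hg)
    obtain ⟨h, -, huniq⟩ := hpair x (hsub g hg hx) y (hsub g hg hy) hxy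
    have h1 : g = h := huniq g ⟨hg, hx, hy⟩
    have h2 : f = h := huniq f ⟨hf, by rw [hfE]; exact hsub g hg hx, by rw [hfE]; exact hsub g hg hy⟩
    exact hgf (h1 ▸ h2.symm ▸ rfl)
  -- E has at least 3 elements
  have h3 : 3 ≤ E.card := by
    obtain ⟨f, hf, -⟩ := Finset.exists_mem_ne htwo ∅
    obtain ⟨x, hx, y, hy, hxy⟩ := Finset.one_lt_card.mp (hflat f hf)
    have hfE : f ≠ E := hne f hf
    have hssub : f ⊂ E := lt_of_le_of_ne (hsub f hf) hfE
    obtain ⟨z, hzE, hzf⟩ := Finset.exists_of_ssubset hssub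
    have hsub3 : ({z, x, y} : Finset α) ⊆ E := by
      intro a ha
      simp only [Finset.mem_insert, Finset.mem_singleton] at ha
      rcases ha with rfl | rfl | rfl
      · exact hzE
      · exact hsub f hf hx
      · exact hsub f hf hy
    have hcard3 : ({z, x, y} : Finset α).card = 3 := by
      rw [Finset.card_insert_of_notMem, Finset.card_insert_of_notMem, Finset.card_singleton]
      · simp only [Finset.mem_singleton]
        exact hxy
      · simp only [Finset.mem_insert, Finset.mem_singleton]
        rintro (rfl | rfl) <;> exact hzf ‹_›
    calc 3 = ({z, x, y} : Finset α).card := hcard3.symm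
      _ ≤ E.card := Finset.card_le_card hsub3
  have hEpos : 0 < E.card := by omega
  obtain ⟨p, hp⟩ := Finset.card_pos.mp hEpos
  classical
  set E' : Finset α := E.erase p with hE'
  set S : Finset (Finset α) := F.filter (fun f => p ∈ f ∧ f.card = 2) with hS
  set T : Finset (Finset α) := F.filter (fun f => ¬(p ∈ f ∧ f.card = 2)) with hT
  set F' : Finset (Finset α) := T.image (fun f => f.erase p) with hF'
  have hTF : T ⊆ F := Finset.filter_subset _ _
  have hSF : S ⊆ F := Finset.filter_subset _ _
  -- helper: a flat containing two distinct non-p points is in T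
  have hT_of : ∀ f ∈ F, ∀ x, x ∈ f → ∀ y, y ∈ f → x ≠ y → x ≠ p → y ≠ p → f ∈ T := by
    intro f hf x hx y hy hxy hxp hyp
    rw [hT, Finset.mem_filter]
    refine ⟨hf, ?_⟩
    rintro ⟨hpf, hc2⟩
    have h1 : (f.erase p).card = 1 := by
      rw [Finset.card_erase_of_mem hpf, hc2]
    obtain ⟨a, ha⟩ := Finset.card_eq_one.mp h1
    have hxa : x ∈ f.erase p := Finset.mem_erase.mpr ⟨hxp, hx⟩
    have hya : y ∈ f.erase p := Finset.mem_erase.mpr ⟨hyp, hy⟩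
    rw [ha, Finset.mem_singleton] at hxa hya
    exact hxy (hxa.trans hya.symm)
  -- injectivity of erase on F
  have hkey : ∀ f ∈ F, ∀ g ∈ F, p ∈ f → p ∉ g → f.erase p ≠ g.erase p := by
    intro f hf g hg hpf hpg heq
    have hgsub : g ⊆ f := by
      rw [← Finset.erase_eq_of_notMem hpg, ← heq]
      exact Finset.erase_subset _ _
    obtain ⟨x, hx, y, hy, hxy⟩ := Finset.one_lt_card.mp (hflat g hg)
    obtain ⟨h, -, huniq⟩ := hpair x (hsub g hg hx) y (hsub g hg hy) hxy
    have h1 : g = h := huniq g ⟨hg, hx, hy⟩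
    have h2 : f = h := huniq f ⟨hf, hgsub hx, hgsub hy⟩
    have : f = g := h2.trans h1.symm
    subst this
    exact hpg hpf
  have hinj : ∀ f ∈ F, ∀ g ∈ F, f.erase p = g.erase p → f = g := by
    intro f hf g hg heq
    by_cases hpf : p ∈ f <;> by_cases hpg : p ∈ g
    · rw [← Finset.insert_erase hpf, ← Finset.insert_erase hpg, heq]
    · exact absurd heq (hkey f hf g hg hpf hpg)
    · exact absurd heq.symm (hkey g hg f hf hpg hpf)
    · rw [← Finset.erase_eq_of_notMem hpf, ← Finset.erase_eq_of_notMem hpg, heq]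
  have hinjT : Set.InjOn (fun f : Finset α => f.erase p) (T : Set (Finset α)) :=
    fun f hf g hg heq => hinj f (hTF hf) g (hTF hg) heq
  -- cardinalities
  have hST : S.card + T.card = F.card := Finset.card_filter_add_card_filter_not _
  have hF'card : F'.card = T.card := Finset.card_image_of_injOn hinjT
  have hE'card : E'.card = E.card - 1 := Finset.card_erase_of_mem hp
  -- sum over F' equals sum over T of erased cards
  have hsumF' : ∑ f ∈ F', (f.card : ℤ) = ∑ g ∈ T, ((g.erase p).card : ℤ) :=
    Finset.sum_image (fun f hf g hg heq => hinjT hf hg heq)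
  -- sum splitting
  have hsplit : ∑ f ∈ F, (f.card : ℤ)
      = ∑ f ∈ S, (f.card : ℤ) + ∑ f ∈ T, (f.card : ℤ) :=
    (Finset.sum_filter_add_sum_filter_not F _ _).symm
  have hsumS : ∑ f ∈ S, (f.card : ℤ) = 2 * S.card := by
    have hc : ∀ f ∈ S, (f.card : ℤ) = 2 := by
      intro f hf
      rw [hS, Finset.mem_filter] at hf
      exact_mod_cast hf.2.2
    rw [Finset.sum_congr rfl hc, Finset.sum_const, nsmul_eq_mul, mul_comm]
  -- erased sums over T
  have hsumT : ∑ g ∈ T, ((g.erase p).card : ℤ)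
      = ∑ g ∈ T, (g.card : ℤ) - ((T.filter (fun g => p ∈ g)).card : ℤ) := by
    have step : ∀ g ∈ T, ((g.erase p).card : ℤ) = (g.card : ℤ) - (if p ∈ g then 1 else 0) := by
      intro g hg
      by_cases hpg : p ∈ g
      · have h1 : 1 ≤ g.card := le_trans one_le_two (hflat g (hTF hg))
        rw [Finset.card_erase_of_mem hpg, if_pos hpg]
        push_cast [Nat.cast_sub h1]
        ring
      · rw [Finset.erase_eq_of_notMem hpg, if_neg hpg]
        ring
    rw [Finset.sum_congr rfl step, Finset.sum_sub_distrib, Finset.sum_boole]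
  -- counting flats through p
  have hrsplit : (S.card : ℤ) + ((T.filter (fun g => p ∈ g)).card : ℤ)
      = ((F.filter (fun f => p ∈ f)).card : ℤ) := by
    have e1 : S = F.filter (fun f => p ∈ f ∧ f.card = 2) := hS
    have e2 : T.filter (fun g => p ∈ g) = F.filter (fun f => p ∈ f ∧ f.card ≠ 2) := by
      rw [hT, Finset.filter_filter]
      apply Finset.filter_congr
      intro f hf
      simp only [ne_eq]
      tauto
    have := Finset.card_filter_add_card_filter_not
      (s := F.filter (fun f => p ∈ f)) (p := fun f => f.card = 2)
    rw [Finset.filter_filter, Finset.filter_filter] at this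
    have e3 : S.card = ((F.filter (fun f => p ∈ f ∧ f.card = 2)).card) := by rw [e1]
    have e4 : (T.filter (fun g => p ∈ g)).card
        = (F.filter (fun f => p ∈ f ∧ f.card ≠ 2)).card := by rw [e2]
    have e5 : (F.filter fun a => p ∈ a ∧ a.card = 2) = (F.filter fun f => p ∈ f ∧ f.card = 2) := rfl
    have e6 : (F.filter fun a => p ∈ a ∧ ¬a.card = 2) = (F.filter fun f => p ∈ f ∧ f.card ≠ 2) := rfl
    rw [e5, e6] at this
    push_cast [e3, e4, ← this]
    ring
  -- at least two flats through p
  have hr2 : 2 ≤ (F.filter (fun f => p ∈ f)).card := by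
    obtain ⟨x, hxE', hxp'⟩ : ∃ x ∈ E, x ≠ p := by
      obtain ⟨x, hx, hxp⟩ := Finset.exists_mem_ne (show 1 < E.card by omega) p
      exact ⟨x, hx, hxp⟩
    obtain ⟨h₁, ⟨hh₁F, hph₁, hxh₁⟩, -⟩ := hpair p hp x hxE' (Ne.symm hxp')
    have hssub : h₁ ⊂ E := lt_of_le_of_ne (hsub h₁ hh₁F) (hne h₁ hh₁F)
    obtain ⟨z, hzE, hzh₁⟩ := Finset.exists_of_ssubset hssub
    have hzp : z ≠ p := fun h => hzh₁ (h ▸ hph₁)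
    obtain ⟨h₂, ⟨hh₂F, hph₂, hzh₂⟩, -⟩ := hpair p hp z hzE (Ne.symm hzp)
    have hne12 : h₁ ≠ h₂ := fun h => hzh₁ (h ▸ hzh₂)
    apply Finset.one_lt_card.mpr
    exact ⟨h₁, Finset.mem_filter.mpr ⟨hh₁F, hph₁⟩, h₂, Finset.mem_filter.mpr ⟨hh₂F, hph₂⟩, hne12⟩
  by_cases hT2 : 2 ≤ T.card
  · -- inductive case: apply IH to (E', F')
    have hsub' : ∀ f ∈ F', f ⊆ E' := by
      intro f hf
      rw [hF', Finset.mem_image] at hf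
      obtain ⟨g, hg, rfl⟩ := hf
      exact Finset.erase_subset_erase p (hsub g (hTF hg))
    have hpair' : ∀ x ∈ E', ∀ y ∈ E', x ≠ y → ∃! f, f ∈ F' ∧ x ∈ f ∧ y ∈ f := by
      intro x hx y hy hxy
      obtain ⟨hxp, hxE⟩ := Finset.mem_erase.mp hx
      obtain ⟨hyp, hyE⟩ := Finset.mem_erase.mp hy
      obtain ⟨f, ⟨hfF, hxf, hyf⟩, huniq⟩ := hpair x hxE y hyE hxy
      have hfT : f ∈ T := hT_of f hfF x hxf y hyf hxy hxp hyp
      refine ⟨f.erase p, ⟨Finset.mem_image_of_mem _ hfT,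
        Finset.mem_erase.mpr ⟨hxp, hxf⟩, Finset.mem_erase.mpr ⟨hyp, hyf⟩⟩, ?_⟩
      rintro f' ⟨hf'F', hxf', hyf'⟩
      rw [hF', Finset.mem_image] at hf'F'
      obtain ⟨g, hgT, rfl⟩ := hf'F'
      have hxg : x ∈ g := (Finset.erase_subset _ _) hxf'
      have hyg : y ∈ g := (Finset.erase_subset _ _) hyf'
      rw [huniq g ⟨hTF hgT, hxg, hyg⟩]
    have hflat' : ∀ f ∈ F', 2 ≤ f.card := by
      intro f hf
      rw [hF', Finset.mem_image] at hf
      obtain ⟨g, hg, rfl⟩ := hf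
      rw [hT, Finset.mem_filter] at hg
      obtain ⟨hgF, hgne⟩ := hg
      by_cases hpg : p ∈ g
      · have : g.card ≠ 2 := fun h => hgne ⟨hpg, h⟩
        have h2 : 2 ≤ g.card := hflat g hgF
        rw [Finset.card_erase_of_mem hpg]
        omega
      · rw [Finset.erase_eq_of_notMem hpg]
        exact hflat g hgF
    have htwo' : 2 ≤ F'.card := by rw [hF'card]; exact hT2
    have hlt : E'.card < E.card := Finset.card_erase_lt_of_mem hp
    have IH := ih E'.card hlt E' F' rfl hsub' hpair' hflat' htwo'
    rw [hsumF', hF'card, hsumT] at IH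
    have hE'int : (E'.card : ℤ) = (E.card : ℤ) - 1 := by
      rw [hE'card]
      omega
    have hSTint : (S.card : ℤ) + (T.card : ℤ) = (F.card : ℤ) := by exact_mod_cast hST
    have hr2int : (2 : ℤ) ≤ ((F.filter (fun f => p ∈ f)).card : ℤ) := by exact_mod_cast hr2
    rw [hE'int] at IH
    linarith [hsplit, hsumS, hrsplit]
  · -- degenerate case: T has at most one element, near-pencil
    push_neg at hT2
    -- T is nonempty, hence a singleton {g}
    obtain ⟨x, hx, y, hy, hxy⟩ := Finset.one_lt_card.mp (show 1 < E'.card by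
      rw [hE'card]; omega)
    obtain ⟨hxp, hxE⟩ := Finset.mem_erase.mp hx
    obtain ⟨hyp, hyE⟩ := Finset.mem_erase.mp hy
    obtain ⟨f₀, ⟨hf₀F, hxf₀, hyf₀⟩, -⟩ := hpair x hxE y hyE hxy
    have hf₀T : f₀ ∈ T := hT_of f₀ hf₀F x hxf₀ y hyf₀ hxy hxp hyp
    have hTcard : T.card = 1 := by
      have : 0 < T.card := Finset.card_pos.mpr ⟨f₀, hf₀T⟩
      omega
    obtain ⟨g, hg⟩ := Finset.card_eq_one.mp hTcard
    have hgT : g ∈ T := by rw [hg]; exact Finset.mem_singleton_self g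
    have hgF : g ∈ F := hTF hgT
    -- every point of E' lies in g
    have hE'g : E' ⊆ g := by
      intro z hz
      obtain ⟨w, hw, hwz⟩ := Finset.exists_mem_ne (show 1 < E'.card by
        rw [hE'card]; omega) z
      obtain ⟨hwp, hwE⟩ := Finset.mem_erase.mp hw
      obtain ⟨hzp, hzE⟩ := Finset.mem_erase.mp hz
      obtain ⟨h, ⟨hhF, hzh, hwh⟩, -⟩ := hpair z hzE w hwE (Ne.symm hwz)
      have hhT : h ∈ T := hT_of h hhF z hzh w hwh (Ne.symm hwz) hzp hwp
      rw [hg, Finset.mem_singleton] at hhT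
      exact hhT ▸ hzh
    -- p is not in g
    have hpg : p ∉ g := by
      intro hpgmem
      apply hne g hgF
      apply Finset.Subset.antisymm (hsub g hgF)
      intro z hz
      by_cases hzp : z = p
      · exact hzp ▸ hpgmem
      · exact hE'g (Finset.mem_erase.mpr ⟨hzp, hz⟩)
    have hgE' : g = E' := by
      apply Finset.Subset.antisymm _ hE'g
      intro z hz
      exact Finset.mem_erase.mpr ⟨fun h => hpg (h ▸ hz), hsub g hgF hz⟩
    -- injection from E' into S : each point goes to its line with p
    have hSgeq : E'.card ≤ S.card := by
      apply Finset.card_le_card_of_injOn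
        (fun z => (F.filter (fun h => p ∈ h ∧ z ∈ h)).sup id)
      · -- maps to S
        intro z hz
        obtain ⟨hzp, hzE⟩ := Finset.mem_erase.mp hz
        obtain ⟨h, ⟨hhF, hph, hzh⟩, huniq⟩ := hpair p hp z hzE (Ne.symm hzp)
        have hfilter : F.filter (fun h' => p ∈ h' ∧ z ∈ h') = {h} := by
          ext h'
          simp only [Finset.mem_filter, Finset.mem_singleton]
          constructor
          · rintro ⟨hh'F, hph', hzh'⟩
            exact huniq h' ⟨hh'F, hph', hzh'⟩
          · rintro rfl
            exact ⟨hhF, hph, hzh⟩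
        simp only [hfilter, Finset.sup_singleton, id]
        -- h ∈ S since h ∉ T (because p ∈ h but p ∉ g)
        have hhnT : h ∉ T := by
          rw [hg, Finset.mem_singleton]
          intro heq
          exact hpg (heq ▸ hph)
        rw [hS, Finset.mem_coe, Finset.mem_filter]
        refine ⟨hhF, ?_⟩
        by_contra hcon
        exact hhnT (Finset.mem_filter.mpr ⟨hhF, hcon⟩)
      · -- injective
        intro z hz w hw heq
        obtain ⟨hzp, hzE⟩ := Finset.mem_erase.mp hz
        obtain ⟨hwp, hwE⟩ := Finset.mem_erase.mp hw
        obtain ⟨h, ⟨hhF, hph, hzh⟩, huniq⟩ := hpair p hp z hzE (Ne.symm hzp)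
        obtain ⟨h', ⟨hh'F, hph', hwh'⟩, huniq'⟩ := hpair p hp w hwE (Ne.symm hwp)
        have hfilter : F.filter (fun h'' => p ∈ h'' ∧ z ∈ h'') = {h} := by
          ext h''
          simp only [Finset.mem_filter, Finset.mem_singleton]
          exact ⟨fun ⟨a, b, c⟩ => huniq h'' ⟨a, b, c⟩, fun e => e ▸ ⟨hhF, hph, hzh⟩⟩
        have hfilter' : F.filter (fun h'' => p ∈ h'' ∧ w ∈ h'') = {h'} := by
          ext h''
          simp only [Finset.mem_filter, Finset.mem_singleton]
          exact ⟨fun ⟨a, b, c⟩ => huniq' h'' ⟨a, b, c⟩, fun e => e ▸ ⟨hh'F, hph', hwh'⟩⟩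
        simp only [hfilter, hfilter', Finset.sup_singleton, id] at heq
        subst heq
        -- h contains p, z, w; h ∉ T hence card h = 2, so z = w
        have hhnT : h ∉ T := by
          rw [hg, Finset.mem_singleton]
          intro e
          exact hpg (e ▸ hph)
        have hcard2 : h.card = 2 := by
          by_contra hcc
          exact hhnT (Finset.mem_filter.mpr ⟨hhF, fun hc => hcc hc.2⟩)
        have h1 : (h.erase p).card = 1 := by rw [Finset.card_erase_of_mem hph, hcard2]
        obtain ⟨a, ha⟩ := Finset.card_eq_one.mp h1
        have hza : z ∈ h.erase p := Finset.mem_erase.mpr ⟨hzp, hzh⟩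
        have hwa : w ∈ h.erase p := Finset.mem_erase.mpr ⟨hwp, hwh'⟩
        rw [ha, Finset.mem_singleton] at hza hwa
        exact hza.trans hwa.symm
    -- now compute the sums exactly
    have hsumTg : ∑ f ∈ T, (f.card : ℤ) = (g.card : ℤ) := by
      rw [hg, Finset.sum_singleton]
    have hgcard : (g.card : ℤ) = (E.card : ℤ) - 1 := by
      rw [hgE']
      rw [hE'card]
      omega
    have hSint : ((E.card : ℤ) - 1) ≤ (S.card : ℤ) := by
      have : E.card - 1 ≤ S.card := hE'card ▸ hSgeq
      omega
    have hSTint : (S.card : ℤ) + (T.card : ℤ) = (F.card : ℤ) := by exact_mod_cast hST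
    have hT1 : (T.card : ℤ) = 1 := by exact_mod_cast hTcard
    linarith [hsplit, hsumS, hsumTg, hgcard]

/-- For a rank 3 simple matroid with `n` elements, `ℓ` flats and `m` complete flags,
`m − 2n + 1 ≥ ℓ − 2`, equivalently `2n ≤ m − ℓ + 3` (stated over `ℤ`). -/
theorem flags_flats_inequality {α : Type*} [DecidableEq α]
    (E : Finset α) (F : Finset (Finset α))
    (hsub : ∀ f ∈ F, f ⊆ E)
    (hpair : ∀ x ∈ E, ∀ y ∈ E, x ≠ y → ∃! f, f ∈ F ∧ x ∈ f ∧ y ∈ f)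
    (hflat : ∀ f ∈ F, 2 ≤ f.card)
    (htwo : 2 ≤ F.card) :
    2 * (E.card : ℤ) ≤ (∑ f ∈ F, (f.card : ℤ)) - (F.card : ℤ) + 3 := by
  exact ffi_aux E.card E F rfl hsub hpair hflat htwo
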